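/- For any bipartite graph G: (1/4)·las_bal,1(G) ≤ (1/2)·√(g_bal,1(G)) ≤ h_bal,1(G) = (1/4)·θ_bal(G). Moreover, (1/2)·√(g_bal,1(G)) = (1/4)·θ_bal(G) if and only if las_bal,1(G) = θ_bal(G). -/

import Mathlib

open Finset Matrix

variable {V : Type*} [Fintype V] [DecidableEq V]

/-- The trace inner product `⟨A,B⟩ = ∑_{i,j} A_{ij} B_{ij}` of two matrices. -/
noncomputable def ip (A B : Matrix V V ℝ) : ℝ := ∑ i, ∑ j, A i j * B i j

/-- The matrix `C` associated to the bipartition `(P, Pᶜ)`: entry `1/2` whenever the two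
indices lie on opposite sides of the bipartition, and `0` otherwise. -/
noncomputable def Cmat (P : Finset V) : Matrix V V ℝ :=
  Matrix.of fun i j => if (i ∈ P ↔ j ∈ P) then 0 else 1/2

/-- The `(1+|V|)×(1+|V|)` block matrix `[[1, xᵀ],[x, X]]`. -/
noncomputable def dblk (x : V → ℝ) (X : Matrix V V ℝ) : Matrix (Unit ⊕ V) (Unit ⊕ V) ℝ :=
  Matrix.fromBlocks 1 (Matrix.of fun _ j => x j) (Matrix.of fun i _ => x i) X

/-- The semidefinite programming bound `h₁(G)` for a bipartite graph `G` with
bipartition `(P, Pᶜ)`. -/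
noncomputable def h1 (G : SimpleGraph V) (P : Finset V) : ℝ :=
  sSup {x : ℝ | ∃ X : Matrix V V ℝ, X.PosSemidef ∧ X.trace = 1 ∧
    (∀ i j, G.Adj i j → X i j = 0) ∧ x = ip (Cmat P) X}

/-- The semidefinite programming bound `g₁(G)` for a bipartite graph `G` with
bipartition `(P, Pᶜ)`. -/
noncomputable def g1 (G : SimpleGraph V) (P : Finset V) : ℝ :=
  sSup {x : ℝ | ∃ X : Matrix V V ℝ, (dblk (fun i => X i i) X).PosSemidef ∧
    (∀ i j, G.Adj i j → X i j = 0) ∧ x = ip (Cmat P) X}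

/-- The adjacency matrix of a graph is Hermitian (over `ℝ`). -/
lemma adjHerm (G : SimpleGraph V) [DecidableRel G.Adj] : (G.adjMatrix ℝ).IsHermitian := by
  rw [Matrix.IsHermitian, Matrix.conjTranspose_eq_transpose_of_trivial]
  exact G.isSymm_adjMatrix

/-- The list of eigenvalues of a Hermitian matrix, with multiplicities,
sorted in nondecreasing order. -/
noncomputable def eigList (A : Matrix V V ℝ) (hA : A.IsHermitian) : List ℝ :=
  (Finset.univ.val.map hA.eigenvalues).sort (· ≤ ·)

/-- The second largest eigenvalue (with multiplicities) of a Hermitian matrix. -/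
noncomputable def secondLargest (A : Matrix V V ℝ) (hA : A.IsHermitian) : ℝ :=
  (eigList A hA).getD (Fintype.card V - 2) 0

/-- The smallest eigenvalue of a Hermitian matrix. -/
noncomputable def smallestEig (A : Matrix V V ℝ) (hA : A.IsHermitian) : ℝ :=
  (eigList A hA).getD 0 0

/-- A graph is edge-transitive if its automorphism group acts transitively on edges. -/
def EdgeTransitive (G : SimpleGraph V) : Prop :=
  ∀ e f : G.edgeSet, ∃ φ : G ≃g G, φ.mapEdgeSet e = f

/-- A graph is vertex-transitive if its automorphism group acts transitively on vertices. -/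
def VertexTransitive (G : SimpleGraph V) : Prop :=
  ∀ u v : V, ∃ φ : G ≃g G, φ u = v

/-- The sign vector of the bipartition: `+1` on `P` and `−1` on `Pᶜ`. -/
noncomputable def fvec (P : Finset V) : V → ℝ := fun v => if v ∈ P then 1 else -1

/-- The rank-one matrix `ffᵀ`. -/
noncomputable def fMat (P : Finset V) : Matrix V V ℝ :=
  Matrix.of fun i j => fvec P i * fvec P j

/-- The all-ones matrix `J`. -/
noncomputable def Jmat : Matrix V V ℝ := Matrix.of fun _ _ => (1 : ℝ)

/-- `las_bal,1(G)`. -/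
noncomputable def lasBal1 (G : SimpleGraph V) (P : Finset V) : ℝ :=
  sSup {x : ℝ | ∃ X : Matrix V V ℝ, (dblk (fun i => X i i) X).PosSemidef ∧
    (∀ i j, G.Adj i j → X i j = 0) ∧ ip (fMat P) X = 0 ∧ x = X.trace}

/-- `g_bal,1(G)`. -/
noncomputable def gBal1 (G : SimpleGraph V) (P : Finset V) : ℝ :=
  sSup {x : ℝ | ∃ X : Matrix V V ℝ, (dblk (fun i => X i i) X).PosSemidef ∧
    (∀ i j, G.Adj i j → X i j = 0) ∧ ip (fMat P) X = 0 ∧ x = ip (Cmat P) X}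

/-- `θ_bal(G)`. -/
noncomputable def thetaBal (G : SimpleGraph V) (P : Finset V) : ℝ :=
  sSup {x : ℝ | ∃ X : Matrix V V ℝ, X.PosSemidef ∧ X.trace = 1 ∧
    (∀ i j, G.Adj i j → X i j = 0) ∧ ip (fMat P) X = 0 ∧
    ip (Matrix.diagonal (fvec P)) X = 0 ∧ x = ip Jmat X}

/-- `h_bal,1(G)`. -/
noncomputable def hBal1 (G : SimpleGraph V) (P : Finset V) : ℝ :=
  sSup {x : ℝ | ∃ X : Matrix V V ℝ, X.PosSemidef ∧ X.trace = 1 ∧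
    (∀ i j, G.Adj i j → X i j = 0) ∧ ip (fMat P) X = 0 ∧
    ip (Matrix.diagonal (fvec P)) X = 0 ∧ x = ip (Cmat P) X}


/-! ### Auxiliary lemmas -/

set_option linter.unusedSectionVars false
set_option maxHeartbeats 1000000

/-- The quadratic form `wᵀ X w`. -/
noncomputable def qf (X : Matrix V V ℝ) (w : V → ℝ) : ℝ := ∑ i, ∑ j, w i * X i j * w j

lemma psd_qf {X : Matrix V V ℝ} (hX : X.PosSemidef) (w : V → ℝ) : 0 ≤ qf X w := by
  have := hX.dotProduct_mulVec_nonneg w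
  simpa [qf, dotProduct, mulVec, Finset.mul_sum, mul_assoc] using this

lemma psd_symm {X : Matrix V V ℝ} (hX : X.PosSemidef) (i j : V) : X j i = X i j := by
  have := congr_fun (congr_fun hX.1 i) j
  simpa [Matrix.conjTranspose_apply] using this

lemma psd_of_qf {X : Matrix V V ℝ} (hsym : ∀ i j, X j i = X i j)
    (h : ∀ w, 0 ≤ qf X w) : X.PosSemidef := by
  refine posSemidef_iff_dotProduct_mulVec.mpr ⟨?_, ?_⟩
  · ext i j; simp [Matrix.conjTranspose_apply, hsym]
  · intro w
    have := h w
    simpa [qf, dotProduct, mulVec, Finset.mul_sum, mul_assoc] using this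

lemma qf_smul (X : Matrix V V ℝ) (c : ℝ) (w : V → ℝ) : qf (c • X) w = c * qf X w := by
  simp only [qf, Matrix.smul_apply, smul_eq_mul, Finset.mul_sum]
  exact Finset.sum_congr rfl fun i _ => Finset.sum_congr rfl fun j _ => by ring

lemma psd_smul {X : Matrix V V ℝ} (hX : X.PosSemidef) {c : ℝ} (hc : 0 ≤ c) :
    (c • X).PosSemidef := by
  refine psd_of_qf (fun i j => by simp [Matrix.smul_apply, psd_symm hX i j]) fun w => ?_
  rw [qf_smul]
  exact mul_nonneg hc (psd_qf hX w)

lemma qf_eq_rows (X : Matrix V V ℝ) (w : V → ℝ) :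
    qf X w = ∑ i, w i * (∑ j, X i j * w j) := by
  simp [qf, Finset.mul_sum, mul_assoc]

lemma dblk_qf {x : V → ℝ} {X : Matrix V V ℝ} (h : (dblk x X).PosSemidef)
    (a : ℝ) (w : V → ℝ) :
    0 ≤ a * a + 2 * a * (∑ i, x i * w i) + qf X w := by
  have h2 := h.dotProduct_mulVec_nonneg (Sum.elim (fun _ => a) w)
  simp only [dotProduct, mulVec, Fintype.sum_sum_type, dblk, Matrix.fromBlocks_apply₁₁,
    Matrix.fromBlocks_apply₁₂, Matrix.fromBlocks_apply₂₁, Matrix.fromBlocks_apply₂₂,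
    Sum.elim_inl, Sum.elim_inr, Matrix.of_apply, Matrix.one_apply, Pi.star_apply,
    star_trivial, Finset.univ_unique, Finset.sum_singleton, if_true,
    mul_add, Finset.sum_add_distrib] at h2
  have e1 : ∑ i, w i * (x i * a) = a * ∑ i, x i * w i := by
    rw [Finset.mul_sum]; exact Finset.sum_congr rfl fun i _ => by ring
  rw [qf_eq_rows]
  rw [e1] at h2
  linarith

lemma dblk_key {X : Matrix V V ℝ} (h : (dblk (fun i => X i i) X).PosSemidef)
    (w : V → ℝ) : (∑ i, X i i * w i) ^ 2 ≤ qf X w := by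
  have := dblk_qf h (-(∑ i, X i i * w i)) w
  nlinarith [this]

lemma dblk_symm {X : Matrix V V ℝ} {x : V → ℝ} (h : (dblk x X).PosSemidef)
    (i j : V) : X j i = X i j := by
  have := congr_fun (congr_fun h.1 (Sum.inr i)) (Sum.inr j)
  simpa [dblk, Matrix.conjTranspose_apply] using this

lemma dblk_psd {X : Matrix V V ℝ} {x : V → ℝ} (h : (dblk x X).PosSemidef) :
    X.PosSemidef := by
  refine psd_of_qf (dblk_symm h) fun w => ?_
  have h0 := dblk_qf h 0 w
  linarith

lemma qf_single (X : Matrix V V ℝ) (i : V) : qf X (Pi.single i 1) = X i i := by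
  simp [qf, Pi.single_apply, Finset.sum_ite_eq', ite_mul, mul_ite]

lemma sum_diag_single (X : Matrix V V ℝ) (i : V) :
    ∑ k, X k k * (Pi.single i 1 : V → ℝ) k = X i i := by
  simp [Pi.single_apply, mul_ite, Finset.sum_ite_eq']

lemma dblk_diag_le_one {X : Matrix V V ℝ} (h : (dblk (fun i => X i i) X).PosSemidef)
    (i : V) : X i i ≤ 1 := by
  have := dblk_key h (Pi.single i 1)
  rw [qf_single, sum_diag_single] at this
  nlinarith

lemma psd_diag_nonneg {X : Matrix V V ℝ} (h : ∀ w, 0 ≤ qf X w) (i : V) : 0 ≤ X i i := by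
  have := h (Pi.single i 1); rwa [qf_single] at this

lemma qf_pair (X : Matrix V V ℝ) {i j : V} (hij : i ≠ j) :
    qf X (Pi.single i 1 - Pi.single j 1) = X i i + X j j - X i j - X j i := by
  simp [qf, Pi.sub_apply, Pi.single_apply, sub_mul, mul_sub, ite_mul, mul_ite,
    Finset.sum_sub_distrib, Finset.sum_ite_eq', hij, hij.symm]
  ring

lemma entry_le {X : Matrix V V ℝ} (h : ∀ w, 0 ≤ qf X w)
    (hsym : ∀ i j, X j i = X i j) (i j : V) : X i j ≤ (X i i + X j j) / 2 := by
  rcases eq_or_ne i j with rfl | hij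
  · linarith [psd_diag_nonneg h i]
  · have := h (Pi.single i 1 - Pi.single j 1)
    rw [qf_pair X hij] at this
    have hs := hsym i j
    linarith

lemma ip_smul (A : Matrix V V ℝ) (c : ℝ) (X : Matrix V V ℝ) :
    ip A (c • X) = c * ip A X := by
  simp [ip, Finset.mul_sum, Matrix.smul_apply, smul_eq_mul, mul_left_comm]

lemma ip_J (X : Matrix V V ℝ) : ip Jmat X = qf X (fun _ => 1) := by
  simp [ip, Jmat, qf]

lemma ip_fMat (P : Finset V) (X : Matrix V V ℝ) : ip (fMat P) X = qf X (fvec P) := by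
  refine Finset.sum_congr rfl fun i _ => Finset.sum_congr rfl fun j _ => ?_
  simp [fMat]; ring

lemma Cmat_apply (P : Finset V) (i j : V) :
    Cmat P i j = (1 - fvec P i * fvec P j) / 4 := by
  by_cases hi : i ∈ P <;> by_cases hj : j ∈ P <;>
    simp [Cmat, fvec, hi, hj] <;> norm_num

lemma ip_C (P : Finset V) (X : Matrix V V ℝ) :
    ip (Cmat P) X = (ip Jmat X - ip (fMat P) X) / 4 := by
  have h : ∀ i j : V, Cmat P i j * X i j = (Jmat i j * X i j - fMat P i j * X i j) / 4 := by
    intro i j; rw [Cmat_apply]; simp [Jmat, fMat]; ring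
  simp only [ip, h, ← Finset.sum_div, Finset.sum_sub_distrib]

lemma feas_ipC {P : Finset V} {X : Matrix V V ℝ} (hf : ip (fMat P) X = 0) :
    ip (Cmat P) X = ip Jmat X / 4 := by
  rw [ip_C, hf, sub_zero]

lemma ip_diag (P : Finset V) (X : Matrix V V ℝ) :
    ip (Matrix.diagonal (fvec P)) X = ∑ i, fvec P i * X i i := by
  simp [ip, Matrix.diagonal_apply, ite_mul, Finset.sum_ite_eq]

lemma trace_eq_sum (X : Matrix V V ℝ) : X.trace = ∑ i, X i i := by
  simp [Matrix.trace, Matrix.diag]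

lemma dblk_zero_psd : (dblk (fun i => (0 : Matrix V V ℝ) i i) (0 : Matrix V V ℝ)).PosSemidef := by
  refine posSemidef_iff_dotProduct_mulVec.mpr ⟨?_, ?_⟩
  · ext s t
    cases s <;> cases t <;>
      simp [dblk, Matrix.conjTranspose_apply, Matrix.one_apply]
  · intro v
    simp only [dotProduct, mulVec, Fintype.sum_sum_type, dblk, Matrix.fromBlocks_apply₁₁,
      Matrix.fromBlocks_apply₁₂, Matrix.fromBlocks_apply₂₁, Matrix.fromBlocks_apply₂₂,
      Matrix.of_apply, Matrix.one_apply, Pi.star_apply, star_trivial,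
      Finset.univ_unique, Finset.sum_singleton, if_true, Matrix.zero_apply, zero_mul,
      mul_zero, Finset.sum_const_zero, add_zero, zero_add]
    nlinarith [mul_self_nonneg (v (Sum.inl ())), Finset.sum_nonneg
      (fun (i : V) (_ : i ∈ Finset.univ) => mul_self_nonneg (v (Sum.inr i)))]

lemma psd_trace_nonneg {X : Matrix V V ℝ} (hX : X.PosSemidef) : 0 ≤ X.trace := by
  rw [trace_eq_sum]
  exact Finset.sum_nonneg fun i _ => psd_diag_nonneg (psd_qf hX) i

lemma psd_ipJ_nonneg {X : Matrix V V ℝ} (hX : X.PosSemidef) : 0 ≤ ip Jmat X := by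
  rw [ip_J]; exact psd_qf hX _

lemma psd_ipJ_le {X : Matrix V V ℝ} (hX : X.PosSemidef) :
    ip Jmat X ≤ (Fintype.card V : ℝ) * X.trace := by
  have h1 : ip Jmat X ≤ ∑ i, ∑ j, (X i i + X j j) / 2 := by
    simp only [ip, Jmat, Matrix.of_apply, one_mul]
    exact Finset.sum_le_sum fun i _ => Finset.sum_le_sum fun j _ =>
      entry_le (psd_qf hX) (psd_symm hX) i j
  have h2 : ∑ i, ∑ j, (X i i + X j j) / 2 = (Fintype.card V : ℝ) * X.trace := by
    have e : ∀ i : V, ∑ j, (X i i + X j j) / 2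
        = (Fintype.card V : ℝ) * X i i / 2 + (∑ j, X j j) / 2 := by
      intro i
      rw [← Finset.sum_div, Finset.sum_add_distrib, Finset.sum_const, Finset.card_univ,
        nsmul_eq_mul, add_div]
    rw [trace_eq_sum, Finset.sum_congr rfl fun i _ => e i, Finset.sum_add_distrib,
      Finset.sum_const, Finset.card_univ, nsmul_eq_mul, ← Finset.sum_div, ← Finset.mul_sum]
    ring
  linarith

lemma dblk_trace_le {X : Matrix V V ℝ} (hd : (dblk (fun i => X i i) X).PosSemidef) :
    X.trace ≤ (Fintype.card V : ℝ) := by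
  rw [trace_eq_sum]
  calc ∑ i, X i i ≤ ∑ _i : V, (1 : ℝ) :=
        Finset.sum_le_sum fun i _ => dblk_diag_le_one hd i
    _ = (Fintype.card V : ℝ) := by simp

lemma dblk_trace_sq_le {X : Matrix V V ℝ} (hd : (dblk (fun i => X i i) X).PosSemidef) :
    X.trace ^ 2 ≤ ip Jmat X := by
  rw [ip_J, trace_eq_sum]
  have := dblk_key hd (fun _ => 1)
  simpa using this

lemma dblk_fdiag {P : Finset V} {X : Matrix V V ℝ}
    (hd : (dblk (fun i => X i i) X).PosSemidef) (hf : ip (fMat P) X = 0) :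
    ip (Matrix.diagonal (fvec P)) X = 0 := by
  rw [ip_diag]
  have hk := dblk_key hd (fvec P)
  rw [← ip_fMat, hf] at hk
  have h0 : (∑ i, X i i * fvec P i) = 0 := by nlinarith [sq_nonneg (∑ i, X i i * fvec P i)]
  rw [← h0]
  exact Finset.sum_congr rfl fun i _ => mul_comm _ _


/-- The feasible-value set for `lasBal1`. -/
def SlSet (G : SimpleGraph V) (P : Finset V) : Set ℝ :=
  {x : ℝ | ∃ X : Matrix V V ℝ, (dblk (fun i => X i i) X).PosSemidef ∧
    (∀ i j, G.Adj i j → X i j = 0) ∧ ip (fMat P) X = 0 ∧ x = X.trace}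

/-- The feasible-value set for `gBal1`. -/
def SgSet (G : SimpleGraph V) (P : Finset V) : Set ℝ :=
  {x : ℝ | ∃ X : Matrix V V ℝ, (dblk (fun i => X i i) X).PosSemidef ∧
    (∀ i j, G.Adj i j → X i j = 0) ∧ ip (fMat P) X = 0 ∧ x = ip (Cmat P) X}

/-- The feasible-value set for `thetaBal`. -/
def StSet (G : SimpleGraph V) (P : Finset V) : Set ℝ :=
  {x : ℝ | ∃ X : Matrix V V ℝ, X.PosSemidef ∧ X.trace = 1 ∧
    (∀ i j, G.Adj i j → X i j = 0) ∧ ip (fMat P) X = 0 ∧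
    ip (Matrix.diagonal (fvec P)) X = 0 ∧ x = ip Jmat X}

/-- The feasible-value set for `hBal1`. -/
def ShSet (G : SimpleGraph V) (P : Finset V) : Set ℝ :=
  {x : ℝ | ∃ X : Matrix V V ℝ, X.PosSemidef ∧ X.trace = 1 ∧
    (∀ i j, G.Adj i j → X i j = 0) ∧ ip (fMat P) X = 0 ∧
    ip (Matrix.diagonal (fvec P)) X = 0 ∧ x = ip (Cmat P) X}

/-- for any bipartite graph `G`,
`(1/4)·las_bal,1(G) ≤ (1/2)·√(g_bal,1(G)) ≤ h_bal,1(G) = (1/4)·θ_bal(G)`, and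
`(1/2)·√(g_bal,1(G)) = (1/4)·θ_bal(G)` iff `las_bal,1(G) = θ_bal(G)`. -/
theorem stmt16 (G : SimpleGraph V) (P : Finset V)
    (hbip : ∀ ⦃u v⦄, G.Adj u v → (u ∈ P ↔ v ∉ P)) :
    (1/4 : ℝ) * lasBal1 G P ≤ (1/2 : ℝ) * Real.sqrt (gBal1 G P) ∧
    (1/2 : ℝ) * Real.sqrt (gBal1 G P) ≤ hBal1 G P ∧
    hBal1 G P = (1/4 : ℝ) * thetaBal G P ∧
    ((1/2 : ℝ) * Real.sqrt (gBal1 G P) = (1/4 : ℝ) * thetaBal G P ↔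
      lasBal1 G P = thetaBal G P) := by
  classical
  have hls : lasBal1 G P = sSup (SlSet G P) := rfl
  have hgs : gBal1 G P = sSup (SgSet G P) := rfl
  have hts : thetaBal G P = sSup (StSet G P) := rfl
  have hhs : hBal1 G P = sSup (ShSet G P) := rfl
  have hcard0 : (0 : ℝ) ≤ (Fintype.card V : ℝ) := Nat.cast_nonneg _
  have h0l : (0 : ℝ) ∈ SlSet G P :=
    ⟨0, dblk_zero_psd, fun i j _ => rfl, by simp [ip], by simp⟩
  have h0g : (0 : ℝ) ∈ SgSet G P :=
    ⟨0, dblk_zero_psd, fun i j _ => rfl, by simp [ip], by simp [ip]⟩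
  have hbdd_l : BddAbove (SlSet G P) := ⟨(Fintype.card V : ℝ), by
    rintro t ⟨X, hd, -, -, rfl⟩; exact dblk_trace_le hd⟩
  have hbdd_g : BddAbove (SgSet G P) :=
    ⟨(Fintype.card V : ℝ) * (Fintype.card V : ℝ) / 4, by
      rintro c ⟨X, hd, -, hf, rfl⟩
      have h1 := psd_ipJ_le (dblk_psd hd)
      have h2 := dblk_trace_le hd
      have h3 := psd_trace_nonneg (dblk_psd hd)
      rw [feas_ipC hf]
      nlinarith⟩
  have hbdd_t : BddAbove (StSet G P) := ⟨(Fintype.card V : ℝ), by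
    rintro z ⟨X, hX, htr, -, -, -, rfl⟩
    have := psd_ipJ_le hX
    rw [htr, mul_one] at this
    exact this⟩
  have hbdd_h : BddAbove (ShSet G P) := ⟨(Fintype.card V : ℝ) / 4, by
    rintro c ⟨X, hX, htr, -, hf, -, rfl⟩
    have := psd_ipJ_le hX
    rw [htr, mul_one] at this
    rw [feas_ipC hf]; linarith⟩
  have hl0 : 0 ≤ lasBal1 G P := hls ▸ le_csSup hbdd_l h0l
  have hg0 : 0 ≤ gBal1 G P := hgs ▸ le_csSup hbdd_g h0g
  have hh0 : 0 ≤ hBal1 G P := by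
    rw [hhs]
    rcases Set.eq_empty_or_nonempty (ShSet G P) with he | ⟨c, hc⟩
    · rw [he, Real.sSup_empty]
    · obtain ⟨X, hX, htr, hedge, hf, hdg, rfl⟩ := hc
      have hc0 : 0 ≤ ip (Cmat P) X := by
        rw [feas_ipC hf]; linarith [psd_ipJ_nonneg hX]
      exact le_trans hc0 (le_csSup hbdd_h ⟨X, hX, htr, hedge, hf, hdg, rfl⟩)
  have hθ0 : 0 ≤ thetaBal G P := by
    rw [hts]
    rcases Set.eq_empty_or_nonempty (StSet G P) with he | ⟨c, hc⟩
    · rw [he, Real.sSup_empty]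
    · obtain ⟨X, hX, htr, hedge, hf, hdg, rfl⟩ := hc
      exact le_trans (psd_ipJ_nonneg hX) (le_csSup hbdd_t ⟨X, hX, htr, hedge, hf, hdg, rfl⟩)
  -- (1) las ≤ 2 √g
  have h_l_le : lasBal1 G P ≤ 2 * Real.sqrt (gBal1 G P) := by
    rw [hls]
    refine csSup_le ⟨0, h0l⟩ ?_
    rintro t ⟨X, hd, hedge, hf, rfl⟩
    have hXpsd := dblk_psd hd
    have ht0 : 0 ≤ X.trace := psd_trace_nonneg hXpsd
    have hsq : X.trace ^ 2 ≤ ip Jmat X := dblk_trace_sq_le hd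
    have hcg : ip (Cmat P) X ≤ gBal1 G P := by
      rw [hgs]; exact le_csSup hbdd_g ⟨X, hd, hedge, hf, rfl⟩
    have hC : ip (Cmat P) X = ip Jmat X / 4 := feas_ipC hf
    have hhalf : X.trace / 2 ≤ Real.sqrt (gBal1 G P) := by
      rw [Real.le_sqrt (by linarith) hg0]
      nlinarith
    linarith
  -- (2) g ≤ 4 h²
  have h_g_le : gBal1 G P ≤ 4 * (hBal1 G P) ^ 2 := by
    rw [hgs]
    refine csSup_le ⟨0, h0g⟩ ?_
    rintro c ⟨X, hd, hedge, hf, rfl⟩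
    have hXpsd := dblk_psd hd
    have ht0 : 0 ≤ X.trace := psd_trace_nonneg hXpsd
    have hC : ip (Cmat P) X = ip Jmat X / 4 := feas_ipC hf
    have hc0 : 0 ≤ ip (Cmat P) X := by
      rw [hC]; linarith [psd_ipJ_nonneg hXpsd]
    have hsq : X.trace ^ 2 ≤ ip Jmat X := dblk_trace_sq_le hd
    have hJle : ip Jmat X ≤ (Fintype.card V : ℝ) * X.trace := psd_ipJ_le hXpsd
    rcases eq_or_lt_of_le ht0 with h0 | hpos
    · rw [← h0, mul_zero] at hJle
      nlinarith [sq_nonneg (hBal1 G P)]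
    · have hmem : ip (Cmat P) (X.trace⁻¹ • X) ∈ ShSet G P := by
        refine ⟨X.trace⁻¹ • X, psd_smul hXpsd (le_of_lt (inv_pos.mpr hpos)),
          ?_, ?_, ?_, ?_, rfl⟩
        · rw [Matrix.trace_smul, smul_eq_mul, inv_mul_cancel₀ (ne_of_gt hpos)]
        · intro i j hij; simp [Matrix.smul_apply, hedge i j hij]
        · rw [ip_smul, hf, mul_zero]
        · rw [ip_smul, dblk_fdiag hd hf, mul_zero]
      have hch : ip (Cmat P) (X.trace⁻¹ • X) ≤ hBal1 G P := hhs ▸ le_csSup hbdd_h hmem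
      rw [ip_smul] at hch
      have hct : ip (Cmat P) X ≤ hBal1 G P * X.trace := by
        rw [inv_mul_le_iff₀ hpos] at hch
        linarith [hch]
      nlinarith [mul_le_mul hct hct hc0 (mul_nonneg hh0 ht0),
        mul_le_mul_of_nonneg_left hsq (sq_nonneg (hBal1 G P)), hh0, hc0, hpos, hC]
  -- (3) √g ≤ 2h
  have h_sqrt_le : Real.sqrt (gBal1 G P) ≤ 2 * hBal1 G P := by
    rw [Real.sqrt_le_left (by linarith)]
    nlinarith [h_g_le]
  -- (4) h = θ/4
  have hhalf : hBal1 G P = thetaBal G P / 4 := by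
    have h1 : hBal1 G P ≤ thetaBal G P / 4 := by
      rw [hhs]
      rcases Set.eq_empty_or_nonempty (ShSet G P) with he | hne
      · rw [he, Real.sSup_empty]; linarith
      · refine csSup_le hne ?_
        rintro c ⟨X, hX, htr, hedge, hf, hdg, rfl⟩
        have hmem : ip Jmat X ∈ StSet G P := ⟨X, hX, htr, hedge, hf, hdg, rfl⟩
        have := hts ▸ le_csSup hbdd_t hmem
        rw [feas_ipC hf]
        linarith
    have h2 : thetaBal G P ≤ 4 * hBal1 G P := by
      rw [hts]
      rcases Set.eq_empty_or_nonempty (StSet G P) with he | hne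
      · rw [he, Real.sSup_empty]; linarith
      · refine csSup_le hne ?_
        rintro z ⟨X, hX, htr, hedge, hf, hdg, rfl⟩
        have hmem : ip (Cmat P) X ∈ ShSet G P := ⟨X, hX, htr, hedge, hf, hdg, rfl⟩
        have h3 := hhs ▸ le_csSup hbdd_h hmem
        rw [feas_ipC hf] at h3
        linarith
    linarith
  -- (5) the iff
  refine ⟨by linarith, by linarith, by linarith, ?_, ?_⟩
  · intro heq
    have hlasθ : lasBal1 G P ≤ thetaBal G P := by linarith
    refine le_antisymm hlasθ ?_
    by_contra hlt
    push_neg at hlt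
    have hθpos : 0 < thetaBal G P := lt_of_le_of_lt hl0 hlt
    have hsqeq : Real.sqrt (gBal1 G P) = thetaBal G P / 2 := by linarith
    have hgθ : gBal1 G P = thetaBal G P ^ 2 / 4 := by
      have hq := Real.sq_sqrt hg0
      rw [hsqeq] at hq
      nlinarith [hq]
    have hδpos : 0 < thetaBal G P - lasBal1 G P := by linarith
    have hε : gBal1 G P - (thetaBal G P - lasBal1 G P) * thetaBal G P / 4
        < sSup (SgSet G P) := by
      rw [← hgs]; nlinarith
    obtain ⟨c, hcS, hclt⟩ := exists_lt_of_lt_csSup ⟨0, h0g⟩ hε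
    obtain ⟨X, hd, hedge, hf, rfl⟩ := hcS
    have hXpsd := dblk_psd hd
    have ht0 : 0 ≤ X.trace := psd_trace_nonneg hXpsd
    have hC : ip (Cmat P) X = ip Jmat X / 4 := feas_ipC hf
    have hsqt : X.trace ^ 2 ≤ ip Jmat X := dblk_trace_sq_le hd
    have hJle : ip Jmat X ≤ (Fintype.card V : ℝ) * X.trace := psd_ipJ_le hXpsd
    rcases eq_or_lt_of_le ht0 with h0 | hpos
    · rw [← h0, mul_zero] at hJle
      rw [hgθ] at hclt
      nlinarith
    · have hmem : ip Jmat (X.trace⁻¹ • X) ∈ StSet G P := by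
        refine ⟨X.trace⁻¹ • X, psd_smul hXpsd (le_of_lt (inv_pos.mpr hpos)),
          ?_, ?_, ?_, ?_, rfl⟩
        · rw [Matrix.trace_smul, smul_eq_mul, inv_mul_cancel₀ (ne_of_gt hpos)]
        · intro i j hij; simp [Matrix.smul_apply, hedge i j hij]
        · rw [ip_smul, hf, mul_zero]
        · rw [ip_smul, dblk_fdiag hd hf, mul_zero]
      have hθb : ip Jmat (X.trace⁻¹ • X) ≤ thetaBal G P := hts ▸ le_csSup hbdd_t hmem
      rw [ip_smul] at hθb
      have h4c : ip Jmat X ≤ X.trace * thetaBal G P := by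
        rw [inv_mul_le_iff₀ hpos] at hθb
        exact hθb
      have hmem2 : X.trace ∈ SlSet G P := ⟨X, hd, hedge, hf, rfl⟩
      have htlas : X.trace ≤ lasBal1 G P := hls ▸ le_csSup hbdd_l hmem2
      have hprod : X.trace * thetaBal G P ≤ lasBal1 G P * thetaBal G P :=
        mul_le_mul_of_nonneg_right htlas (le_of_lt hθpos)
      rw [hgθ] at hclt
      nlinarith
  · intro heq
    have h1 : (1/4 : ℝ) * lasBal1 G P ≤ (1/2 : ℝ) * Real.sqrt (gBal1 G P) := by linarith
    linarith
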